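/- Let f be a complex polynomial of degree d ≥ 2. Then there is no differentiable function w : [0,∞) → ℂ with w′(t) = f(w(t)) for all t ≥ 0 and ‖w(t)‖ → ∞ as t → +∞. In other words, a real-time solution of ẇ = f(w) cannot escape to infinity in infinite forward time: escape to w = ∞ occurs, if at all, only by blow-up in finite time. -/

import Mathlib

open Filter

/-- for a complex polynomial `f` of degree `d ≥ 2`, no real-time solution
of `ẇ = f(w)` on `[0,∞)` can escape to infinity in infinite forward time. -/
theorem no_escape_to_infinity_in_infinite_time
    (f : Polynomial ℂ) (hf : 2 ≤ f.natDegree) :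
    ¬ ∃ w : ℝ → ℂ,
        (∀ t ∈ Set.Ici (0 : ℝ), HasDerivWithinAt w (f.eval (w t)) (Set.Ici 0) t) ∧
        Tendsto (fun t => ‖w t‖) atTop atTop := by
  have hf0 : f ≠ 0 := by intro h; rw [h] at hf; simp at hf
  rintro ⟨w, hw, hlim⟩
  set d : ℕ := f.natDegree with hd
  set a : ℂ := f.leadingCoeff with haa
  have ha : a ≠ 0 := Polynomial.leadingCoeff_ne_zero.mpr hf0
  -- inverse tends to 0
  have hinv : Tendsto (fun t => (w t)⁻¹) atTop (nhds (0 : ℂ)) := by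
    rw [tendsto_zero_iff_norm_tendsto_zero]
    simp only [norm_inv]
    exact hlim.inv_tendsto_atTop
  -- the rescaled polynomial value tends to a
  have hrev : Tendsto (fun t => f.reverse.eval (w t)⁻¹) atTop (nhds a) := by
    have h2 : Tendsto (fun z : ℂ => f.reverse.eval z) (nhds 0) (nhds a) := by
      have := (Polynomial.continuous (R := ℂ) f.reverse).tendsto 0
      rwa [show f.reverse.eval 0 = a from by
        rw [← Polynomial.coeff_zero_eq_eval_zero, Polynomial.coeff_zero_reverse]] at this
    exact h2.comp hinv
  -- eventual nonvanishing of w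
  have hne : ∀ᶠ t in atTop, w t ≠ 0 := by
    filter_upwards [hlim.eventually_ge_atTop 1] with t ht
    intro h; rw [h] at ht; simp at ht; linarith
  -- the key identity: for z ≠ 0,  z^{-d} * f(z) = reverse.eval z⁻¹
  have key : ∀ z : ℂ, z ≠ 0 → z ^ (-(d:ℤ)) * f.eval z = f.reverse.eval z⁻¹ := by
    intro z hz
    haveI := invertibleOfNonzero hz
    have h1 : Polynomial.eval₂ (RingHom.id ℂ) (⅟ z) f.reverse * z ^ d
        = Polynomial.eval₂ (RingHom.id ℂ) z f := Polynomial.eval₂_reverse_mul_pow _ _ f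
    rw [invOf_eq_right_inv (mul_inv_cancel₀ hz)] at h1
    rw [Polynomial.eval₂_eq_eval_map, Polynomial.eval₂_eq_eval_map, Polynomial.map_id,
      Polynomial.map_id] at h1
    rw [← h1, zpow_neg, zpow_natCast]
    field_simp
  set c : ℂ := ((1 : ℂ) - d) * a with hc
  have hcne : c ≠ 0 := by
    apply mul_ne_zero _ ha
    rw [sub_ne_zero]
    intro h
    have : (1 : ℕ) = d := by exact_mod_cast h
    omega
  -- the derivative of s = w^{1-d} along the flow
  set n : ℤ := 1 - (d : ℤ) with hn
  set g : ℝ → ℂ := fun t => ((1 : ℂ) - d) * f.reverse.eval (w t)⁻¹ with hg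
  have hs : ∀ t ∈ Set.Ici (0:ℝ), w t ≠ 0 →
      HasDerivWithinAt (fun t => w t ^ n) (g t) (Set.Ici 0) t := by
    intro t ht hwt
    have h1 := (hasDerivAt_zpow n (w t) (Or.inl hwt)).comp_hasDerivWithinAt t (hw t ht)
    have h2 : ((n : ℂ) * w t ^ (n - 1)) * f.eval (w t) = g t := by
      have hn1 : n - 1 = -(d : ℤ) := by omega
      rw [hn1, mul_assoc, key _ hwt, hg]
      push_cast [hn]
      ring
    rwa [h2] at h1
  -- g tends to c
  have hgc : Tendsto g atTop (nhds c) := hrev.const_mul _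
  -- s tends to 0
  have hs0 : Tendsto (fun t => w t ^ n) atTop (nhds (0 : ℂ)) := by
    have hsalt : (fun t => w t ^ n) = fun t => ((w t)⁻¹) ^ (d - 1 : ℕ) := by
      funext t
      rw [show n = -((d - 1 : ℕ) : ℤ) by push_cast [Nat.cast_sub (by omega : 1 ≤ d)]; omega,
        zpow_neg, zpow_natCast, inv_pow]
    rw [hsalt]
    have := hinv.pow (d - 1)
    rwa [zero_pow (by omega : d - 1 ≠ 0)] at this
  -- project on the direction of c
  set φ : ℝ → ℝ := fun t => ((starRingEnd ℂ) c * w t ^ n).re with hφ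
  have hφ0 : Tendsto φ atTop (nhds 0) := by
    have := (Complex.continuous_re.tendsto _).comp (hs0.const_mul ((starRingEnd ℂ) c))
    simp at this
    exact this
  have hφd : ∀ t ∈ Set.Ici (0:ℝ), w t ≠ 0 →
      HasDerivWithinAt φ (((starRingEnd ℂ) c * g t).re) (Set.Ici 0) t := by
    intro t ht hwt
    have := Complex.reCLM.hasFDerivAt.comp_hasDerivWithinAt t
      (((hs t ht hwt).const_mul ((starRingEnd ℂ) c)))
    simp at this ⊢
    exact this
  set m : ℝ := ((starRingEnd ℂ) c * c).re with hm
  have hmpos : 0 < m := by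
    have h5 : ((starRingEnd ℂ) c * c).re = Complex.normSq c := by
      simp [Complex.normSq_apply, Complex.mul_re, Complex.conj_re, Complex.conj_im]
    rw [hm, h5]
    exact Complex.normSq_pos.mpr hcne
  have hgev : ∀ᶠ t in atTop, m / 2 < ((starRingEnd ℂ) c * g t).re := by
    have h3 : Tendsto (fun t => ((starRingEnd ℂ) c * g t).re) atTop (nhds m) := by
      rw [hm]
      exact Tendsto.comp (Complex.continuous_re.tendsto _) (hgc.const_mul _)
    exact h3.eventually (eventually_gt_nhds (half_lt_self hmpos))
  obtain ⟨T, hT⟩ := eventually_atTop.1 (hne.and (hgev.and (eventually_ge_atTop (0:ℝ))))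
  have hT0 : (0:ℝ) ≤ T := (hT T le_rfl).2.2
  -- monotonicity of ψ = φ - (m/2) t on [T, ∞)
  set ψ : ℝ → ℝ := fun t => φ t - m / 2 * t with hψ
  have hψd : ∀ t ∈ Set.Ici T,
      HasDerivWithinAt ψ (((starRingEnd ℂ) c * g t).re - m / 2) (Set.Ici T) t := by
    intro t ht
    have h4 := (hφd t (le_trans hT0 ht) (hT t ht).1).mono (Set.Ici_subset_Ici.mpr hT0)
    have h6 : HasDerivWithinAt (fun t : ℝ => m / 2 * t) (m / 2) (Set.Ici T) t := by
      simpa using (hasDerivWithinAt_id t (Set.Ici T)).const_mul (m / 2)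
    exact h4.sub h6
  have hmono : MonotoneOn ψ (Set.Ici T) := by
    apply monotoneOn_of_hasDerivWithinAt_nonneg (convex_Ici T)
      (fun t ht => (hψd t ht).continuousWithinAt)
      (f' := fun t => ((starRingEnd ℂ) c * g t).re - m / 2)
    · intro x hx
      rw [interior_Ici] at hx ⊢
      exact (hψd x (Set.Ioi_subset_Ici_self hx)).mono Set.Ioi_subset_Ici_self
    · intro x hx
      rw [interior_Ici] at hx
      have := (hT x (le_of_lt hx)).2.1
      linarith
  -- hence φ grows linearly, contradicting φ → 0
  have hφtop : Tendsto φ atTop atTop := by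
    have hlin : Tendsto (fun t => ψ T + m / 2 * t) atTop atTop :=
      tendsto_atTop_add_const_left _ _ (tendsto_id.const_mul_atTop (half_pos hmpos))
    apply tendsto_atTop_mono' atTop _ hlin
    filter_upwards [eventually_ge_atTop T] with t ht
    have := hmono (Set.self_mem_Ici) ht ht
    simp only [hψ] at this
    simp only [hψ]
    linarith
  exact not_tendsto_nhds_of_tendsto_atTop hφtop 0 hφ0
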